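/- For x ⊆ [n], any two circular intervals in I'(x) = {[i, pr'_x(i)]_n : csg(x)_i = 1} are either disjoint or one is contained in the other, and each such interval is disjoint from *'(x) = {i : csg(x)_i = *}. -/

import Mathlib

/-- The circular interval `[i,j]_n ⊆ {1,...,n}`. -/
def cIcc (n i j : ℕ) : Finset ℕ :=
  if i ≤ j then Finset.Icc i j else Finset.Icc i n ∪ Finset.Icc 1 j

/-- `c'_x(i,j) = |[i,j]_n ∩ x| - |[i,j]_n \ x|`. -/
def ccfun (n : ℕ) (x : Finset ℕ) (i j : ℕ) : ℤ :=
  ((cIcc n i j ∩ x).card : ℤ) - ((cIcc n i j \ x).card : ℤ)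

/-- `j = pr'_x(i)` for `i ∈ x`: `c'_x(i,j) = 0` and `|[i,j]_n|` is minimal. -/
def IsCPairIn (n : ℕ) (x : Finset ℕ) (i j : ℕ) : Prop :=
  j ∈ Finset.Icc 1 n ∧ ccfun n x i j = 0 ∧
    ∀ j' ∈ Finset.Icc 1 n, ccfun n x i j' = 0 → (cIcc n i j).card ≤ (cIcc n i j').card

/-- `csg(x)_i = *`: position `i` has no circular pair. -/
def CStar (n : ℕ) (x : Finset ℕ) (i : ℕ) : Prop :=
  (i ∈ x ∧ ¬∃ j ∈ Finset.Icc 1 n, ccfun n x i j = 0) ∨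
  (i ∉ x ∧ ¬∃ j ∈ Finset.Icc 1 n, ccfun n x j i = 0)

-- auxiliary development
def cpos (n i t : ℕ) : ℕ := (i - 1 + t) % n + 1
def cdist (n i j : ℕ) : ℕ := (j + n - i) % n
def eps (x : Finset ℕ) (k : ℕ) : ℤ := if k ∈ x then 1 else -1
def walk (n : ℕ) (x : Finset ℕ) (i t : ℕ) : ℤ := ∑ s ∈ Finset.range t, eps x (cpos n i s)

lemma cpos_mem {n : ℕ} (hn : 0 < n) (i t : ℕ) : cpos n i t ∈ Finset.Icc 1 n := by
  have := Nat.mod_lt (i - 1 + t) hn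
  simp only [cpos, Finset.mem_Icc]; omega

lemma cpos_cpos (n i d u : ℕ) : cpos n (cpos n i d) u = cpos n i (d + u) := by
  simp only [cpos]
  rw [Nat.add_sub_cancel, Nat.mod_add_mod]
  ring_nf

lemma cpos_zero {n : ℕ} (hn : 0 < n) {i : ℕ} (hi : i ∈ Finset.Icc 1 n) :
    cpos n i 0 = i := by
  simp only [Finset.mem_Icc] at hi
  simp only [cpos, Nat.add_zero]
  rw [Nat.mod_eq_of_lt (by omega)]; omega

lemma cdist_lt {n : ℕ} (hn : 0 < n) (i j : ℕ) : cdist n i j < n :=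
  Nat.mod_lt _ hn

lemma cpos_cdist {n : ℕ} (hn : 0 < n) {i j : ℕ} (hi : i ∈ Finset.Icc 1 n)
    (hj : j ∈ Finset.Icc 1 n) : cpos n i (cdist n i j) = j := by
  simp only [Finset.mem_Icc] at hi hj
  simp only [cpos, cdist]
  rw [Nat.add_mod_mod]
  have h2 : i - 1 + (j + n - i) = (j - 1) + n := by omega
  rw [h2, Nat.add_mod_right, Nat.mod_eq_of_lt (by omega)]
  omega

lemma cdist_cpos {n : ℕ} (hn : 0 < n) {i : ℕ} (hi : i ∈ Finset.Icc 1 n) (t : ℕ) :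
    cdist n i (cpos n i t) = t % n := by
  simp only [Finset.mem_Icc] at hi
  simp only [cpos, cdist]
  have hr := Nat.mod_lt (i - 1 + t) hn
  have h1 : (i-1+t)%n + 1 + n - i = (i-1+t)%n + (n+1-i) := by omega
  rw [h1, Nat.mod_add_mod]
  have h2 : i-1+t+(n+1-i) = t + n := by omega
  rw [h2, Nat.add_mod_right]

lemma cpos_left_inj {n : ℕ} (hn : 0 < n) {p q : ℕ} (hp : p ∈ Finset.Icc 1 n)
    (hq : q ∈ Finset.Icc 1 n) (t : ℕ) (h : cpos n p t = cpos n q t) : p = q := by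
  simp only [Finset.mem_Icc] at hp hq
  simp only [cpos] at h
  have h2 : (p - 1) + t ≡ (q - 1) + t [MOD n] := by
    unfold Nat.ModEq; omega
  have h3 := Nat.ModEq.add_right_cancel' t h2
  unfold Nat.ModEq at h3
  rw [Nat.mod_eq_of_lt (by omega), Nat.mod_eq_of_lt (by omega)] at h3
  omega

lemma cpos_inj {n : ℕ} (hn : 0 < n) {i s t : ℕ} (hs : s < n) (ht : t < n)
    (h : cpos n i s = cpos n i t) : s = t := by
  simp only [cpos] at h
  have h2 : (i - 1) + s ≡ (i - 1) + t [MOD n] := by unfold Nat.ModEq; omega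
  have h3 := Nat.ModEq.add_left_cancel' (i-1) h2
  unfold Nat.ModEq at h3
  rw [Nat.mod_eq_of_lt hs, Nat.mod_eq_of_lt ht] at h3
  exact h3

lemma cIcc_eq_image {n : ℕ} (hn : 0 < n) {i j : ℕ} (hi : i ∈ Finset.Icc 1 n)
    (hj : j ∈ Finset.Icc 1 n) :
    cIcc n i j = (Finset.range (cdist n i j + 1)).image (cpos n i) := by
  simp only [Finset.mem_Icc] at hi hj
  ext m
  simp only [Finset.mem_image, Finset.mem_range, cIcc]
  split_ifs with hij
  · have hd : cdist n i j = j - i := by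
      have h0 : j + n - i = (j-i) + n := by omega
      simp only [cdist]
      rw [h0, Nat.add_mod_right, Nat.mod_eq_of_lt (by omega)]
    rw [hd]
    constructor
    · intro hm; simp only [Finset.mem_Icc] at hm
      exact ⟨m - i, by omega, by simp only [cpos]; rw [Nat.mod_eq_of_lt (by omega)]; omega⟩
    · rintro ⟨t, ht, rfl⟩
      simp only [cpos, Finset.mem_Icc]
      rw [Nat.mod_eq_of_lt (by omega)]; omega
  · have hd : cdist n i j = j + n - i := by
      simp only [cdist]; rw [Nat.mod_eq_of_lt (by omega)]
    rw [hd]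
    constructor
    · intro hm; simp only [Finset.mem_union, Finset.mem_Icc] at hm
      rcases hm with hm | hm
      · exact ⟨m - i, by omega, by simp only [cpos]; rw [Nat.mod_eq_of_lt (by omega)]; omega⟩
      · refine ⟨m + n - i, by omega, ?_⟩
        simp only [cpos]
        have h1 : i - 1 + (m + n - i) = (m-1) + n := by omega
        rw [h1, Nat.add_mod_right, Nat.mod_eq_of_lt (by omega)]; omega
    · rintro ⟨t, ht, rfl⟩
      simp only [cpos, Finset.mem_union, Finset.mem_Icc]
      by_cases h2 : i - 1 + t < n
      · rw [Nat.mod_eq_of_lt h2]; omega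
      · have h1 : i - 1 + t = (i - 1 + t - n) + n := by omega
        rw [h1, Nat.add_mod_right, Nat.mod_eq_of_lt (by omega)]; omega

lemma card_cIcc {n : ℕ} (hn : 0 < n) {i j : ℕ} (hi : i ∈ Finset.Icc 1 n)
    (hj : j ∈ Finset.Icc 1 n) : (cIcc n i j).card = cdist n i j + 1 := by
  rw [cIcc_eq_image hn hi hj, Finset.card_image_of_injOn, Finset.card_range]
  intro s hs t ht h
  simp only [Finset.coe_range, Set.mem_Iio] at hs ht
  exact cpos_inj hn (by have := cdist_lt hn i j; omega) (by have := cdist_lt hn i j; omega) h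

lemma mem_cIcc {n : ℕ} (hn : 0 < n) {i j m : ℕ} (hi : i ∈ Finset.Icc 1 n)
    (hj : j ∈ Finset.Icc 1 n) :
    m ∈ cIcc n i j ↔ m ∈ Finset.Icc 1 n ∧ cdist n i m ≤ cdist n i j := by
  rw [cIcc_eq_image hn hi hj]
  simp only [Finset.mem_image, Finset.mem_range]
  constructor
  · rintro ⟨t, ht, rfl⟩
    have hD := cdist_lt hn i j
    refine ⟨cpos_mem hn i t, ?_⟩
    rw [cdist_cpos hn hi, Nat.mod_eq_of_lt (by omega)]; omega
  · rintro ⟨hm, hle⟩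
    exact ⟨cdist n i m, by omega, cpos_cdist hn hi hm⟩

lemma sum_eps (A x : Finset ℕ) :
    ∑ a ∈ A, eps x a = ((A ∩ x).card : ℤ) - ((A \ x).card : ℤ) := by
  have h1 : A ∩ x = A.filter (· ∈ x) := by ext a; simp [Finset.mem_filter, and_comm]
  have h2 : A \ x = A.filter (· ∉ x) := by ext a; simp [Finset.mem_filter]
  have e1 : ∑ a ∈ A.filter (· ∈ x), eps x a = ((A.filter (· ∈ x)).card : ℤ) := by
    rw [Finset.sum_congr rfl (g := fun _ => (1:ℤ))
      (fun a ha => by simp only [Finset.mem_filter] at ha; simp [eps, ha.2])]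
    simp
  have e2 : ∑ a ∈ A.filter (· ∉ x), eps x a = -((A.filter (· ∉ x)).card : ℤ) := by
    rw [Finset.sum_congr rfl (g := fun _ => (-1:ℤ))
      (fun a ha => by simp only [Finset.mem_filter] at ha; simp [eps, ha.2])]
    simp
  rw [h1, h2, ← Finset.sum_filter_add_sum_filter_not A (· ∈ x) (eps x), e1, e2]
  ring

lemma ccfun_eq_walk {n : ℕ} (hn : 0 < n) (x : Finset ℕ) {i j : ℕ} (hi : i ∈ Finset.Icc 1 n)
    (hj : j ∈ Finset.Icc 1 n) : ccfun n x i j = walk n x i (cdist n i j + 1) := by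
  rw [ccfun, ← sum_eps, cIcc_eq_image hn hi hj, Finset.sum_image, walk]
  intro s hs t ht h
  simp only [Finset.coe_range, Set.mem_Iio, Finset.mem_range] at hs ht
  have hD := cdist_lt hn i j
  exact cpos_inj hn (by omega) (by omega) h

lemma walk_succ (n : ℕ) (x : Finset ℕ) (i t : ℕ) :
    walk n x i (t+1) = walk n x i t + eps x (cpos n i t) := Finset.sum_range_succ _ _

lemma walk_add (n : ℕ) (x : Finset ℕ) (i d u : ℕ) :
    walk n x i (d + u) = walk n x i d + walk n x (cpos n i d) u := by
  induction u with
  | zero => simp [walk]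
  | succ u ih => rw [← Nat.add_assoc, walk_succ, ih, walk_succ, cpos_cpos]; ring

lemma ivt (f : ℕ → ℤ) {a b : ℕ} (hf : ∀ t, t < b → f (t+1) = f t + 1 ∨ f (t+1) = f t - 1)
    (hab : a ≤ b) (ha : 0 ≤ f a) (hb : f b ≤ 0) : ∃ t, a ≤ t ∧ t ≤ b ∧ f t = 0 := by
  by_contra h
  push_neg at h
  have key : ∀ t, a ≤ t → t ≤ b → 1 ≤ f t := by
    intro t hat
    induction t, hat using Nat.le_induction with
    | base => intro _; have := h a le_rfl hab; omega
    | succ t hat ih =>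
      intro htb
      have h1 := ih (by omega)
      have h2 := hf t (by omega)
      have h3 := h (t+1) (by omega) htb
      omega
  have := key b hab le_rfl
  omega

lemma walk_step (n : ℕ) (x : Finset ℕ) (i : ℕ) :
    ∀ t, walk n x i (t+1) = walk n x i t + 1 ∨ walk n x i (t+1) = walk n x i t - 1 := by
  intro t
  rw [walk_succ]
  by_cases h : cpos n i t ∈ x <;> simp [eps, h] <;> ring

lemma walk_one {n : ℕ} (hn : 0 < n) {x : Finset ℕ} {i : ℕ} (hi : i ∈ Finset.Icc 1 n)
    (hix : i ∈ x) : walk n x i 1 = 1 := by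
  have : walk n x i 1 = walk n x i 0 + eps x (cpos n i 0) := walk_succ n x i 0
  rw [this, cpos_zero hn hi]
  simp [walk, eps, hix]

/-- minimality in walk terms -/
lemma pair_min {n : ℕ} (hn : 0 < n) {x : Finset ℕ} {i j : ℕ} (hi : i ∈ Finset.Icc 1 n)
    (hp : IsCPairIn n x i j) :
    ∀ t, 1 ≤ t → t ≤ n → walk n x i t = 0 → cdist n i j + 1 ≤ t := by
  intro t ht1 htn hw
  have hj := hp.1
  have hj' : cpos n i (t-1) ∈ Finset.Icc 1 n := cpos_mem hn i (t-1)
  have hd : cdist n i (cpos n i (t-1)) = t - 1 := by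
    rw [cdist_cpos hn hi, Nat.mod_eq_of_lt (by omega)]
  have hc : ccfun n x i (cpos n i (t-1)) = 0 := by
    rw [ccfun_eq_walk hn x hi hj', hd]
    have : t - 1 + 1 = t := by omega
    rw [this]; exact hw
  have := hp.2.2 _ hj' hc
  rw [card_cIcc hn hi hj, card_cIcc hn hi hj', hd] at this
  omega

/-- positivity strictly inside the interval, and zero at the end -/
lemma pair_walk {n : ℕ} (hn : 0 < n) {x : Finset ℕ} {i j : ℕ} (hi : i ∈ Finset.Icc 1 n)
    (hix : i ∈ x) (hp : IsCPairIn n x i j) :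
    walk n x i (cdist n i j + 1) = 0 ∧ ∀ t, 1 ≤ t → t ≤ cdist n i j → 1 ≤ walk n x i t := by
  have hj := hp.1
  have hz : walk n x i (cdist n i j + 1) = 0 := by
    rw [← ccfun_eq_walk hn x hi hj]; exact hp.2.1
  refine ⟨hz, fun t ht1 htD => ?_⟩
  by_contra hcon
  push_neg at hcon
  have hD := cdist_lt hn i j
  obtain ⟨t', h1, h2, h3⟩ := ivt (walk n x i) (a := 1) (b := t) (fun t _ => walk_step n x i t)
    (by omega) (by rw [walk_one hn hi hix]; omega) (by omega)
  have := pair_min hn hi hp t' h1 (by omega) h3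
  omega

lemma no_star {n : ℕ} (hn : 0 < n) {x : Finset ℕ} {i₁ j₁ : ℕ}
    (hi1 : i₁ ∈ Finset.Icc 1 n) (h1 : i₁ ∈ x) (hp1 : IsCPairIn n x i₁ j₁) :
    ∀ m ∈ cIcc n i₁ j₁, ¬ CStar n x m := by
  intro m hm hstar
  have hj1 := hp1.1
  have hD := cdist_lt hn i₁ j₁
  obtain ⟨hw0, hwpos⟩ := pair_walk hn hi1 h1 hp1
  rw [mem_cIcc hn hi1 hj1] at hm
  obtain ⟨hmI, hdm⟩ := hm
  have hmeq : cpos n i₁ (cdist n i₁ m) = m := cpos_cdist hn hi1 hmI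
  rcases hstar with ⟨hmx, hne⟩ | ⟨hmx, hne⟩
  · -- m ∈ x : find j' with ccfun m j' = 0
    apply hne
    have hwd : 0 ≤ walk n x i₁ (cdist n i₁ m) := by
      rcases Nat.eq_zero_or_pos (cdist n i₁ m) with h | h
      · simp [h, walk]
      · exact le_trans (by norm_num) (hwpos _ h hdm)
    have hadd := walk_add n x i₁ (cdist n i₁ m) (cdist n i₁ j₁ + 1 - cdist n i₁ m)
    rw [hmeq] at hadd
    have hdu : cdist n i₁ m + (cdist n i₁ j₁ + 1 - cdist n i₁ m) = cdist n i₁ j₁ + 1 := by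
      omega
    rw [hdu, hw0] at hadd
    have hmu : walk n x m (cdist n i₁ j₁ + 1 - cdist n i₁ m) ≤ 0 := by omega
    obtain ⟨t, ht1, ht2, ht3⟩ := ivt (walk n x m) (a := 1)
      (b := cdist n i₁ j₁ + 1 - cdist n i₁ m)
      (fun t _ => walk_step n x m t) (by omega)
      (by rw [walk_one hn hmI hmx]; norm_num) hmu
    refine ⟨cpos n m (t-1), cpos_mem hn m (t-1), ?_⟩
    rw [ccfun_eq_walk hn x hmI (cpos_mem hn m (t-1)), cdist_cpos hn hmI,
      Nat.mod_eq_of_lt (by omega)]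
    have : t - 1 + 1 = t := by omega
    rw [this]; exact ht3
  · -- m ∉ x : find j' with ccfun j' m = 0
    apply hne
    have hd1 : 1 ≤ cdist n i₁ m := by
      rcases Nat.eq_zero_or_pos (cdist n i₁ m) with h | h
      · exfalso; apply hmx
        rw [← hmeq, h, cpos_zero hn hi1]; exact h1
      · exact h
    have hwd1 : 0 ≤ walk n x i₁ (cdist n i₁ m + 1) := by
      rcases Nat.lt_or_ge (cdist n i₁ m) (cdist n i₁ j₁) with h | h
      · exact le_trans (by norm_num) (hwpos _ (by omega) (by omega))
      · have he : cdist n i₁ m + 1 = cdist n i₁ j₁ + 1 := by omega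
        rw [he, hw0]
    have hstep : walk n x i₁ (cdist n i₁ m + 1) = walk n x i₁ (cdist n i₁ m) + eps x m := by
      rw [walk_succ, hmeq]
    have hepsm : eps x m = -1 := by simp [eps, hmx]
    obtain ⟨s, hs0, hsd, hs3⟩ := ivt
      (fun s => walk n x i₁ (cdist n i₁ m - s) - walk n x i₁ (cdist n i₁ m + 1))
      (a := 0) (b := cdist n i₁ m)
      (by
        intro t htd
        have h1' : cdist n i₁ m - t = (cdist n i₁ m - (t+1)) + 1 := by omega
        have hst := walk_step n x i₁ (cdist n i₁ m - (t+1))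
        rw [h1']
        omega)
      (by omega)
      (by simp only [Nat.sub_zero]; rw [hstep, hepsm]; omega)
      (by
        simp only [Nat.sub_self]
        have h0 : walk n x i₁ 0 = 0 := rfl
        omega)
    refine ⟨cpos n i₁ (cdist n i₁ m - s), cpos_mem hn i₁ (cdist n i₁ m - s), ?_⟩
    have hmem := cpos_mem hn i₁ (cdist n i₁ m - s)
    have hmcp : cpos n (cpos n i₁ (cdist n i₁ m - s)) s = m := by
      rw [cpos_cpos]
      have : cdist n i₁ m - s + s = cdist n i₁ m := by omega
      rw [this, hmeq]
    have hdist : cdist n (cpos n i₁ (cdist n i₁ m - s)) m = s := by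
      have h := cdist_cpos hn hmem s
      rw [hmcp, Nat.mod_eq_of_lt (by omega : s < n)] at h
      exact h
    rw [ccfun_eq_walk hn x hmem hmI, hdist]
    have hadd := walk_add n x i₁ (cdist n i₁ m - s) (s + 1)
    have he2 : cdist n i₁ m - s + (s + 1) = cdist n i₁ m + 1 := by omega
    rw [he2] at hadd
    omega

lemma no_cross {n : ℕ} (hn : 0 < n) {x : Finset ℕ} {i₁ j₁ i₂ j₂ : ℕ}
    (hi1 : i₁ ∈ Finset.Icc 1 n) (hi2 : i₂ ∈ Finset.Icc 1 n)
    (h1 : i₁ ∈ x) (h2 : i₂ ∈ x)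
    (hp1 : IsCPairIn n x i₁ j₁) (hp2 : IsCPairIn n x i₂ j₂)
    (hd1 : 1 ≤ cdist n i₁ i₂) (hdD : cdist n i₁ i₂ ≤ cdist n i₁ j₁)
    (hj : cdist n i₂ j₁ ≤ cdist n i₂ j₂) : False := by
  obtain ⟨hw10, hw1pos⟩ := pair_walk hn hi1 h1 hp1
  obtain ⟨hw20, hw2pos⟩ := pair_walk hn hi2 h2 hp2
  set d := cdist n i₁ i₂ with hddef
  set D₁ := cdist n i₁ j₁ with hD1def
  set D₂ := cdist n i₂ j₂ with hD2def
  have hD1 := cdist_lt hn i₁ j₁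
  have hieq : cpos n i₁ d = i₂ := cpos_cdist hn hi1 hi2
  have hjeq : cpos n i₂ (D₁ - d) = j₁ := by
    rw [← hieq, cpos_cpos]
    have : d + (D₁ - d) = D₁ := by omega
    rw [this]
    exact cpos_cdist hn hi1 hp1.1
  have hdist : cdist n i₂ j₁ = D₁ - d := by
    rw [← hjeq, cdist_cpos hn hi2, Nat.mod_eq_of_lt (by omega)]
  rw [hdist] at hj
  have hadd := walk_add n x i₁ d (D₁ - d + 1)
  rw [hieq] at hadd
  have he : d + (D₁ - d + 1) = D₁ + 1 := by omega
  rw [he, hw10] at hadd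
  have hneg : walk n x i₂ (D₁ - d + 1) ≤ -1 := by
    have := hw1pos d hd1 hdD
    omega
  rcases Nat.lt_or_ge (D₁ - d + 1) (D₂ + 1) with h | h
  · have := hw2pos (D₁ - d + 1) (by omega) (by omega)
    omega
  · have : D₁ - d + 1 = D₂ + 1 := by omega
    rw [this, hw20] at hneg
    omega

lemma half {n : ℕ} (hn : 0 < n) {x : Finset ℕ} {i₁ j₁ i₂ j₂ : ℕ}
    (hi1 : i₁ ∈ Finset.Icc 1 n) (hi2 : i₂ ∈ Finset.Icc 1 n)
    (h1 : i₁ ∈ x) (h2 : i₂ ∈ x)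
    (hp1 : IsCPairIn n x i₁ j₁) (hp2 : IsCPairIn n x i₂ j₂)
    (hsub : cdist n i₁ i₂ ≤ cdist n i₁ j₁) :
    cIcc n i₁ j₁ ⊆ cIcc n i₂ j₂ ∨ cIcc n i₂ j₂ ⊆ cIcc n i₁ j₁ := by
  set d := cdist n i₁ i₂ with hddef
  set D₁ := cdist n i₁ j₁ with hD1def
  set D₂ := cdist n i₂ j₂ with hD2def
  have hD1 := cdist_lt hn i₁ j₁
  have hieq : cpos n i₁ d = i₂ := cpos_cdist hn hi1 hi2
  rcases Nat.eq_zero_or_pos d with hd0 | hd1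
  · -- i₁ = i₂
    have heq : i₂ = i₁ := by rw [← hieq, hd0, cpos_zero hn hi1]
    right
    have hcard := hp2.2.2 j₁ hp1.1 (by rw [heq]; exact hp1.2.1)
    rw [card_cIcc hn hi2 hp2.1, card_cIcc hn hi2 hp1.1, heq] at hcard
    intro m hm
    rw [mem_cIcc hn hi2 hp2.1] at hm
    rw [mem_cIcc hn hi1 hp1.1]
    rw [heq] at hm
    exact ⟨hm.1, by omega⟩
  · have hnj : ¬ (cdist n i₂ j₁ ≤ D₂) := fun h =>
      no_cross hn hi1 hi2 h1 h2 hp1 hp2 hd1 hsub h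
    right
    intro m hm
    rw [mem_cIcc hn hi2 hp2.1] at hm
    obtain ⟨hmI, hmu⟩ := hm
    set u := cdist n i₂ m with hudef
    have hmeq : cpos n i₂ u = m := cpos_cdist hn hi2 hmI
    have hjeq : cpos n i₂ (D₁ - d) = j₁ := by
      rw [← hieq, cpos_cpos]
      have : d + (D₁ - d) = D₁ := by omega
      rw [this]
      exact cpos_cdist hn hi1 hp1.1
    have hkey : d + u ≤ D₁ := by
      by_contra hcon
      apply hnj
      rw [← hjeq, cdist_cpos hn hi2, Nat.mod_eq_of_lt (by omega)]
      omega
    rw [mem_cIcc hn hi1 hp1.1]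
    refine ⟨hmI, ?_⟩
    have : cpos n i₁ (d + u) = m := by rw [← cpos_cpos, hieq, hmeq]
    rw [← this, cdist_cpos hn hi1, Nat.mod_eq_of_lt (by omega)]
    exact hkey


/-- any two circular intervals `[i, pr'_x(i)]_n` (for `csg(x)_i = 1`)
are disjoint or nested, and each avoids the circularly starred positions. -/
theorem stmt_15 (n : ℕ) (x : Finset ℕ) (hx : x ⊆ Finset.Icc 1 n)
    (i₁ j₁ i₂ j₂ : ℕ) (hi1 : i₁ ∈ Finset.Icc 1 n) (hi2 : i₂ ∈ Finset.Icc 1 n)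
    (h1 : i₁ ∈ x) (h2 : i₂ ∈ x)
    (hp1 : IsCPairIn n x i₁ j₁) (hp2 : IsCPairIn n x i₂ j₂) :
    (Disjoint (cIcc n i₁ j₁) (cIcc n i₂ j₂) ∨
      cIcc n i₁ j₁ ⊆ cIcc n i₂ j₂ ∨ cIcc n i₂ j₂ ⊆ cIcc n i₁ j₁) ∧
    ∀ m ∈ cIcc n i₁ j₁, ¬ CStar n x m := by
  have hn : 0 < n := by
    simp only [Finset.mem_Icc] at hi1; omega
  constructor
  · by_cases hdisj : Disjoint (cIcc n i₁ j₁) (cIcc n i₂ j₂)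
    · exact Or.inl hdisj
    · right
      obtain ⟨m, hm1, hm2⟩ := Finset.not_disjoint_iff.mp hdisj
      rw [mem_cIcc hn hi1 hp1.1] at hm1
      rw [mem_cIcc hn hi2 hp2.1] at hm2
      obtain ⟨hmI, ha⟩ := hm1
      obtain ⟨_, hc⟩ := hm2
      set a := cdist n i₁ m with hadef
      set c := cdist n i₂ m with hcdef
      have hma : cpos n i₁ a = m := cpos_cdist hn hi1 hmI
      have hmc : cpos n i₂ c = m := cpos_cdist hn hi2 hmI
      rcases le_or_gt c a with hca | hac
      · -- i₂ = cpos i₁ (a - c), cdist i₁ i₂ = a - c ≤ D₁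
        have hieq : cpos n i₁ (a - c) = i₂ := by
          apply cpos_left_inj hn (cpos_mem hn i₁ (a-c)) hi2 c
          rw [cpos_cpos]
          have : a - c + c = a := by omega
          rw [this, hma, hmc]
        have hDa := cdist_lt hn i₁ j₁
        have hdle : cdist n i₁ i₂ ≤ cdist n i₁ j₁ := by
          rw [← hieq, cdist_cpos hn hi1, Nat.mod_eq_of_lt (by omega)]
          omega
        exact half hn hi1 hi2 h1 h2 hp1 hp2 hdle
      · have hieq : cpos n i₂ (c - a) = i₁ := by
          apply cpos_left_inj hn (cpos_mem hn i₂ (c-a)) hi1 a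
          rw [cpos_cpos]
          have : c - a + a = c := by omega
          rw [this, hmc, hma]
        have hDc := cdist_lt hn i₂ j₂
        have hdle : cdist n i₂ i₁ ≤ cdist n i₂ j₂ := by
          rw [← hieq, cdist_cpos hn hi2, Nat.mod_eq_of_lt (by omega)]
          omega
        exact (half hn hi2 hi1 h2 h1 hp2 hp1 hdle).symm
  · exact no_star hn hi1 h1 hp1
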